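/- Let (W(t), M(t)) be a solution of the synaptic ODE with timescale τ = 1/2 and initial condition (W₀, M₀) ∈ D, and suppose K := sup_{t ≥ 0} ‖M(t)⁻¹‖ is finite. Then for all t ≥ 0, ‖M(t)⁻¹W(t)W(t)ᵀM(t)⁻¹ − I_k‖² ≤ K⁴ · e^{−8t} · ‖W₀W₀ᵀ − M₀²‖². -/

import Mathlib

open Matrix Filter
open scoped Matrix

attribute [local instance] Matrix.frobeniusNormedAddCommGroup Matrix.frobeniusNormedSpace

/-- A solution of the synaptic ODE with timescale `τ` on `[0, ∞)`:
a continuously differentiable curve `t ↦ (W t, M t)` staying in the domain `D`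
(i.e. `M t` symmetric positive definite) satisfying
`(1/2)·dW/dt = M⁻¹WA − W` and `τ·dM/dt = M⁻¹WAWᵀM⁻¹ − M`. -/
def IsSynSol {k n : ℕ} (A : Matrix (Fin n) (Fin n) ℝ) (τ : ℝ)
    (W : ℝ → Matrix (Fin k) (Fin n) ℝ) (M : ℝ → Matrix (Fin k) (Fin k) ℝ) : Prop :=
  ∀ t : ℝ, 0 ≤ t →
    (M t).PosDef ∧
    HasDerivWithinAt W ((2 : ℝ) • ((M t)⁻¹ * W t * A - W t)) (Set.Ici 0) t ∧
    HasDerivWithinAt M (τ⁻¹ • ((M t)⁻¹ * W t * A * (W t)ᵀ * (M t)⁻¹ - M t)) (Set.Ici 0) t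

section Aux

attribute [-instance] instTopologicalSpaceMatrix Matrix.instUniformSpace Matrix.addCommGroup Matrix.module

/-- Matrix multiplication as a continuous bilinear map (Frobenius norms). -/
noncomputable def matMulCLM (k m p : ℕ) :
    Matrix (Fin k) (Fin m) ℝ →L[ℝ] Matrix (Fin m) (Fin p) ℝ →L[ℝ] Matrix (Fin k) (Fin p) ℝ :=
  LinearMap.toContinuousLinearMap
    { toFun := fun A => LinearMap.toContinuousLinearMap
        { toFun := fun B => A * B
          map_add' := fun B C => Matrix.mul_add A B C
          map_smul' := fun r B => (Matrix.mul_smul A r B) }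
      map_add' := by
        intro A B
        apply ContinuousLinearMap.ext
        intro C
        simp [Matrix.add_mul]
      map_smul' := by
        intro r A
        apply ContinuousLinearMap.ext
        intro C
        simp [Matrix.smul_mul] }

@[simp] theorem matMulCLM_apply {k m p : ℕ} (A : Matrix (Fin k) (Fin m) ℝ)
    (B : Matrix (Fin m) (Fin p) ℝ) : matMulCLM k m p A B = A * B := rfl

theorem HasDerivWithinAt.matmul {k m p : ℕ} {u : ℝ → Matrix (Fin k) (Fin m) ℝ}
    {v : ℝ → Matrix (Fin m) (Fin p) ℝ} {u' v'} {s : Set ℝ} {x : ℝ}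
    (hu : HasDerivWithinAt u u' s x) (hv : HasDerivWithinAt v v' s x) :
    HasDerivWithinAt (fun t => u t * v t) (u' * v x + u x * v') s x := by
  have hc : HasDerivWithinAt (fun t => matMulCLM k m p (u t)) (matMulCLM k m p u') s x :=
    (matMulCLM k m p).hasFDerivAt.comp_hasDerivWithinAt x hu
  simpa using hc.clm_apply hv

theorem HasDerivWithinAt.matTranspose {k m : ℕ} {u : ℝ → Matrix (Fin k) (Fin m) ℝ}
    {u'} {s : Set ℝ} {x : ℝ} (hu : HasDerivWithinAt u u' s x) :
    HasDerivWithinAt (fun t => (u t)ᵀ) u'ᵀ s x := by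
  have := (LinearMap.toContinuousLinearMap
      ((Matrix.transposeLinearEquiv (Fin k) (Fin m) ℝ ℝ).toLinearMap)).hasFDerivAt.comp_hasDerivWithinAt
      x hu
  exact this

end Aux

/-- If `K` bounds `sup_{t ≥ 0} ‖M(t)⁻¹‖` (Frobenius norm), then for all `t ≥ 0`,
`‖M(t)⁻¹W(t)W(t)ᵀM(t)⁻¹ − I‖² ≤ K⁴·e^{−8t}·‖W₀W₀ᵀ − M₀²‖²`. -/
theorem dist_to_orthonormal_manifold_bound {k n : ℕ} (hk : 0 < k) (hkn : k < n)
    (A : Matrix (Fin n) (Fin n) ℝ) (hA : A.PosDef)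
    (W₀ : Matrix (Fin k) (Fin n) ℝ) (M₀ : Matrix (Fin k) (Fin k) ℝ) (hM₀ : M₀.PosDef)
    (W : ℝ → Matrix (Fin k) (Fin n) ℝ) (M : ℝ → Matrix (Fin k) (Fin k) ℝ)
    (hsol : IsSynSol A (1/2 : ℝ) W M) (hW0 : W 0 = W₀) (hM0 : M 0 = M₀)
    (K : ℝ) (hK : ∀ t : ℝ, 0 ≤ t → ‖(M t)⁻¹‖ ≤ K) :
    ∀ t : ℝ, 0 ≤ t →
      ‖(M t)⁻¹ * (W t * (W t)ᵀ) * (M t)⁻¹ - 1‖ ^ 2 ≤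
        K ^ 4 * Real.exp (-8 * t) * ‖W₀ * W₀ᵀ - M₀ * M₀‖ ^ 2 := by
  -- the error matrix
  set E : ℝ → Matrix (Fin k) (Fin k) ℝ := fun t => W t * (W t)ᵀ - M t * M t with hE
  have hAT : Aᵀ = A := by
    rw [← Matrix.conjTranspose_eq_transpose_of_trivial]
    exact hA.isHermitian
  -- derivative of E
  have hEderiv : ∀ t : ℝ, 0 ≤ t →
      HasDerivWithinAt E ((-4 : ℝ) • E t) (Set.Ici 0) t := by
    intro t ht
    obtain ⟨hMpd, hW', hM'⟩ := hsol t ht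
    have hdet : IsUnit (M t).det := isUnit_iff_ne_zero.2 hMpd.det_pos.ne'
    have h1 : (M t)⁻¹ * M t = 1 := Matrix.nonsing_inv_mul _ hdet
    have h2 : M t * (M t)⁻¹ = 1 := Matrix.mul_nonsing_inv _ hdet
    have hMT : (M t)ᵀ = M t := by
      rw [← Matrix.conjTranspose_eq_transpose_of_trivial]
      exact hMpd.isHermitian
    have hMiT : ((M t)⁻¹)ᵀ = (M t)⁻¹ := by
      rw [Matrix.transpose_nonsing_inv, hMT]
    have hM'2 : HasDerivWithinAt M
        ((2 : ℝ) • ((M t)⁻¹ * W t * A * (W t)ᵀ * (M t)⁻¹ - M t)) (Set.Ici 0) t := by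
      convert hM' using 2
      norm_num
    have h := (hW'.matmul hW'.matTranspose).sub (hM'2.matmul hM'2)
    convert h using 1
    iterate 4 rfl
    simp only [transpose_smul, transpose_sub, transpose_mul, hAT, hMiT, hMT]
    simp only [Matrix.smul_mul, Matrix.mul_smul, sub_mul, mul_sub, Matrix.sub_mul, Matrix.mul_sub, Matrix.mul_assoc,
      Matrix.mul_nonsing_inv_cancel_left _ _ hdet, Matrix.nonsing_inv_mul_cancel_left _ _ hdet,
      h1, h2, Matrix.mul_one, Matrix.one_mul, smul_sub]
    simp only [hE]
    module
  -- the rescaled error is constant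
  have hconst : ∀ t : ℝ, 0 ≤ t → Real.exp (4 * t) • E t = E 0 := by
    intro T hT
    rcases eq_or_lt_of_le hT with rfl | hT'
    · simp
    have hF : ∀ s : ℝ, 0 ≤ s →
        HasDerivWithinAt (fun t => Real.exp (4 * t) • E t) 0 (Set.Ici 0) s := by
      intro s hs
      have hex : HasDerivWithinAt (fun t : ℝ => Real.exp (4 * t))
          (Real.exp (4 * s) * 4) (Set.Ici 0) s := by
        have : HasDerivAt (fun t : ℝ => Real.exp (4 * t)) (Real.exp (4 * s) * 4) s := by
          have h4 : HasDerivAt (fun t : ℝ => 4 * t) 4 s := by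
            simpa using (hasDerivAt_id s).const_mul (4 : ℝ)
          exact (Real.hasDerivAt_exp (4 * s)).comp s h4
        exact this.hasDerivWithinAt
      have := hex.smul (hEderiv s hs)
      convert this using 1
      iterate 4 rfl
      rw [smul_smul, ← add_smul]
      ring_nf
      simp
    have hcont : ContinuousOn (fun t => Real.exp (4 * t) • E t) (Set.Icc 0 T) :=
      fun s hs => ((hF s hs.1).continuousWithinAt).mono (Set.Icc_subset_Ici_self)
    have := constant_of_has_deriv_right_zero hcont (fun s hs =>
      (hF s hs.1).mono (Set.Ici_subset_Ici.2 hs.1)) T (Set.right_mem_Icc.2 hT)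
    simpa using this
  -- bound
  intro t ht
  obtain ⟨hMpd, -, -⟩ := hsol t ht
  have hdet : IsUnit (M t).det := isUnit_iff_ne_zero.2 hMpd.det_pos.ne'
  have h1 : (M t)⁻¹ * M t = 1 := Matrix.nonsing_inv_mul _ hdet
  have h2 : M t * (M t)⁻¹ = 1 := Matrix.mul_nonsing_inv _ hdet
  have hrw : (M t)⁻¹ * (W t * (W t)ᵀ) * (M t)⁻¹ - 1 = (M t)⁻¹ * E t * (M t)⁻¹ := by
    rw [hE]
    simp only [Matrix.mul_sub, Matrix.sub_mul, Matrix.mul_assoc]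
    rw [← Matrix.mul_assoc (M t) (M t) ((M t)⁻¹), Matrix.mul_assoc (M t) ((M t)) ((M t)⁻¹)]
    rw [h2, Matrix.mul_one, h1]
  have hEnorm : ‖E t‖ = Real.exp (-4 * t) * ‖E 0‖ := by
    have h := hconst t ht
    have : ‖Real.exp (4 * t) • E t‖ = ‖E 0‖ := by rw [h]
    rw [norm_smul, Real.norm_eq_abs, abs_of_pos (Real.exp_pos _)] at this
    have hepos := Real.exp_pos (4 * t)
    field_simp [Real.exp_neg] at this ⊢
    rw [← this, mul_comm (Real.exp (4 * t)), mul_assoc, ← Real.exp_add]; simp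
  have hKnn : 0 ≤ K := le_trans (norm_nonneg _) (hK 0 le_rfl)
  have hbound : ‖(M t)⁻¹ * E t * (M t)⁻¹‖ ≤ K * (Real.exp (-4 * t) * ‖E 0‖) * K := by
    calc ‖(M t)⁻¹ * E t * (M t)⁻¹‖ ≤ ‖(M t)⁻¹ * E t‖ * ‖(M t)⁻¹‖ :=
          Matrix.frobenius_norm_mul _ _
      _ ≤ ‖(M t)⁻¹‖ * ‖E t‖ * ‖(M t)⁻¹‖ := by
          gcongr
          exact Matrix.frobenius_norm_mul _ _
      _ ≤ K * (Real.exp (-4 * t) * ‖E 0‖) * K := by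
          rw [hEnorm]
          gcongr <;> [exact hK t ht; exact hK t ht]
  have hE0 : E 0 = W₀ * W₀ᵀ - M₀ * M₀ := by rw [hE]; simp [hW0, hM0]
  rw [hrw]
  have hsq : ‖(M t)⁻¹ * E t * (M t)⁻¹‖ ^ 2 ≤ (K * (Real.exp (-4 * t) * ‖E 0‖) * K) ^ 2 := by
    apply pow_le_pow_left₀ (norm_nonneg _) hbound
  refine le_trans hsq (le_of_eq ?_)
  rw [hE0]
  have hexp : Real.exp (-4 * t) ^ 2 = Real.exp (-8 * t) := by
    rw [← Real.exp_nat_mul]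
    ring_nf
  rw [← hexp]
  ring
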